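/- Let ρ: ℝ → [0,∞) be an even integrable function with supp ρ ⊂ B_R(0), and let ρ_ε(r) := ε^{−n} ρ(r/ε). Fix δ > 0, x′ ∈ ℝ^{n−1}, and for x_n > 0 define a_ε(x_n) := ∫_{B_δ(x′)×(0,δ)} ρ_ε(|x − ŷ|) dy, where x = (x′, x_n) and ŷ = (y′, −y_n) denotes reflection of y = (y′,y_n) across {y_n = 0}. Then a_ε is independent of x′ and satisfies ‖a_ε‖²_{L²(ℝ₊)} ≤ C R ε, where C depends only on ρ and n. -/

import Mathlib

open MeasureTheory Topology Filter

noncomputable section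

/-- `ℝⁿ` as a Euclidean space. -/
abbrev En (n : ℕ) := EuclideanSpace ℝ (Fin n)

/-- The radial kernel `J_ε(x) = ρ_ε(|x|)/|x|²` associated to a radial profile `ρε`. -/
def Jker {n : ℕ} (ρε : ℝ → ℝ) (z : En n) : ℝ := ρε ‖z‖ / ‖z‖ ^ 2

/-- The constant `C_n = ∫_{S^{n-1}} |e₁ ⬝ σ|² dH^{n-1}(σ)`. -/
def sphereConst (n : ℕ) : ℝ :=
  if h : 0 < n then
    ∫ σ in Metric.sphere (0 : En n) 1,
      ((inner ℝ (EuclideanSpace.single (⟨0, h⟩ : Fin n) (1 : ℝ)) σ : ℝ)) ^ 2 ∂μH[(n : ℝ) - 1]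
  else 0

/-- The standing assumptions on the family of mollifiers `ρ_ε` and the kernels
`J_ε(x) = ρ_ε(|x|)/|x|²`:  each `ρ_ε` is nonnegative, even, integrable, has normalized
second moment `∫₀^∞ ρ_ε(r) r^{n-1} dr = 2/C_n`, vanishing tails as `ε ↘ 0`, and
`J_ε ∈ W^{1,1}(ℝⁿ)`. -/
def IsMollifierFamily (n : ℕ) (ρ : ℝ → ℝ → ℝ) : Prop :=
  (∀ ε : ℝ, 0 < ε → ∀ r : ℝ, 0 ≤ ρ ε r) ∧
  (∀ ε : ℝ, 0 < ε → ∀ r : ℝ, ρ ε (-r) = ρ ε r) ∧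
  (∀ ε : ℝ, 0 < ε → Integrable (ρ ε)) ∧
  (∀ ε : ℝ, 0 < ε → (∫ r in Set.Ioi (0 : ℝ), ρ ε r * r ^ (n - 1)) = 2 / sphereConst n) ∧
  (∀ δ : ℝ, 0 < δ →
    Tendsto (fun ε => ∫ r in Set.Ioi δ, ρ ε r * r ^ (n - 1)) (𝓝[>] (0 : ℝ)) (𝓝 0)) ∧
  (∀ ε : ℝ, 0 < ε → Integrable (Jker (ρ ε) : En n → ℝ) ∧
    (∀ᵐ x : En n, DifferentiableAt ℝ (Jker (ρ ε) : En n → ℝ) x) ∧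
    Integrable (fun x : En n => ‖fderiv ℝ (Jker (ρ ε) : En n → ℝ) x‖))

/-- The quantity `a_ε(xₙ) = ∫_{B_δ(x')×(0,δ)} ρ_ε(|x - ŷ|) dy`, where `x = (x', xₙ)` and
`ŷ = (y', -yₙ)`, for the rescaled mollifier `ρ_ε(r) = ε^{-n} ρ(r/ε)`. -/
def aeps (n : ℕ) (ρ₀ : ℝ → ℝ) (ε δ : ℝ) (x' : En (n - 1)) (xn : ℝ) : ℝ :=
  ∫ y in (Metric.ball x' δ) ×ˢ (Set.Ioo (0 : ℝ) δ),
    ρ₀ (Real.sqrt (‖x' - y.1‖ ^ 2 + (xn + y.2) ^ 2) / ε) / ε ^ n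

namespace AepsAux

open Set Metric ENNReal

/-- Coordinate splitting measurable equivalence `ℝ^{m+1} ≃ ℝ^m × ℝ`. -/
def splitEquiv (m : ℕ) : En (m+1) ≃ᵐ (En m × ℝ) :=
  ((MeasurableEquiv.toLp 2 (Fin (m+1) → ℝ)).symm).trans <|
  (MeasurableEquiv.piFinSuccAbove (fun _ : Fin (m+1) => ℝ) (Fin.last m)).trans <|
  (MeasurableEquiv.prodComm).trans <|
  MeasurableEquiv.prodCongr ((MeasurableEquiv.toLp 2 (Fin m → ℝ)).symm).symm (MeasurableEquiv.refl ℝ)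

lemma splitEquiv_mp (m : ℕ) : MeasurePreserving (splitEquiv m) volume volume := by
  have h1 : MeasurePreserving
      (MeasurableEquiv.prodCongr ((MeasurableEquiv.toLp 2 (Fin m → ℝ)).symm).symm
        (MeasurableEquiv.refl ℝ)) volume volume := by
    rw [Measure.volume_eq_prod, Measure.volume_eq_prod]
    exact ((EuclideanSpace.volume_preserving_symm_measurableEquiv_toLp (Fin m)).symm).prod
      (MeasurePreserving.id _)
  have h2 : MeasurePreserving (MeasurableEquiv.prodComm : ℝ × (Fin m → ℝ) ≃ᵐ (Fin m → ℝ) × ℝ)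
      volume volume := by
    rw [Measure.volume_eq_prod, Measure.volume_eq_prod]
    exact Measure.measurePreserving_swap
  unfold splitEquiv
  simp only [MeasurableEquiv.coe_trans]
  exact ((h1.comp h2).comp
      (volume_preserving_piFinSuccAbove (fun _ : Fin (m+1) => ℝ) (Fin.last m))).comp
    (EuclideanSpace.volume_preserving_symm_measurableEquiv_toLp _)

lemma splitEquiv_apply (m : ℕ) (x : En (m+1)) :
    splitEquiv m x = ((WithLp.toLp 2 (fun j => x ((Fin.last m).succAbove j)) : En m), x (Fin.last m)) := rfl

lemma splitEquiv_norm (m : ℕ) (x : En (m+1)) :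
    ‖(splitEquiv m x).1‖ ^ 2 + ((splitEquiv m x).2) ^ 2 = ‖x‖ ^ 2 := by
  rw [splitEquiv_apply]
  rw [EuclideanSpace.norm_eq, EuclideanSpace.norm_eq]
  rw [Real.sq_sqrt (by positivity), Real.sq_sqrt (by positivity)]
  simp only [Real.norm_eq_abs, sq_abs]
  rw [Fin.succAbove_last]
  exact (Fin.sum_univ_castSucc (fun i => x i ^ 2)).symm

lemma lintegral_split (m : ℕ) (g : ℝ → ℝ≥0∞) :
    ∫⁻ z : En m × ℝ, g (Real.sqrt (‖z.1‖ ^ 2 + z.2 ^ 2)) = ∫⁻ x : En (m+1), g ‖x‖ := by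
  rw [← (splitEquiv_mp m).map_eq, lintegral_map_equiv]
  refine lintegral_congr fun x => ?_
  rw [splitEquiv_norm, Real.sqrt_sq (norm_nonneg _)]

lemma lintegral_norm_div (m : ℕ) (g : ℝ → ℝ≥0∞) {ε : ℝ} (hε : 0 < ε) :
    ∫⁻ x : En (m+1), g (‖x‖ / ε) = ENNReal.ofReal (ε ^ (m+1)) * ∫⁻ x : En (m+1), g ‖x‖ := by
  have hne : (ε⁻¹ : ℝ) ≠ 0 := inv_ne_zero hε.ne'
  let e : En (m+1) ≃ᵐ En (m+1) :=
    (Homeomorph.smul (Units.mk0 (ε⁻¹) hne) : En (m+1) ≃ₜ En (m+1)).toMeasurableEquiv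
  have h1 : ∀ x : En (m+1), g (‖x‖ / ε) = g ‖e x‖ := by
    intro x
    show g (‖x‖ / ε) = g ‖ε⁻¹ • x‖
    rw [norm_smul, Real.norm_eq_abs, abs_of_pos (inv_pos.2 hε), inv_mul_eq_div]
  have hmape : Measure.map e volume = Measure.map (fun x : En (m+1) => ε⁻¹ • x) volume := rfl
  calc ∫⁻ x : En (m+1), g (‖x‖ / ε) = ∫⁻ x, g ‖e x‖ := lintegral_congr h1
    _ = ∫⁻ y, g ‖y‖ ∂(Measure.map e volume) := (lintegral_map_equiv (fun y => g ‖y‖) e).symm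
    _ = ENNReal.ofReal |((ε⁻¹) ^ Module.finrank ℝ (En (m+1)))⁻¹| * ∫⁻ x : En (m+1), g ‖x‖ := by
        rw [hmape, Measure.map_addHaar_smul volume hne, lintegral_smul_measure, smul_eq_mul]
    _ = ENNReal.ofReal (ε ^ (m+1)) * ∫⁻ x : En (m+1), g ‖x‖ := by
        rw [inv_pow, inv_inv, finrank_euclideanSpace_fin, abs_of_pos (by positivity)]

lemma null_norm_preimage (m : ℕ) {N : Set ℝ} (hN : volume N = 0) :
    volume {x : En (m+1) | ‖x‖ ∈ N} = 0 := by
  obtain ⟨N', hNN', hN'meas, hN'⟩ := exists_measurable_superset_of_null hN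
  refine measure_mono_null (fun x hx => hNN' hx : {x : En (m+1) | ‖x‖ ∈ N} ⊆ {x | ‖x‖ ∈ N'}) ?_
  have key : volume ({x : En (m+1) | ‖x‖ ∈ N'} ∩ {(0 : En (m+1))}ᶜ) = 0 := by
    set A : Set (({(0 : En (m+1))}ᶜ : Set (En (m+1)))) :=
      Subtype.val ⁻¹' {x : En (m+1) | ‖x‖ ∈ N'} with hA
    have himg : Subtype.val '' A = {x : En (m+1) | ‖x‖ ∈ N'} ∩ {(0 : En (m+1))}ᶜ := by
      rw [Subtype.image_preimage_coe, Set.inter_comm]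
    rw [← himg, ← comap_subtype_coe_apply (measurableSet_singleton _).compl volume A]
    set B : Set (Ioi (0:ℝ)) := Subtype.val ⁻¹' N' with hB
    have hBmeas : MeasurableSet B := measurable_subtype_coe hN'meas
    have hApre : A = (homeomorphUnitSphereProd (En (m+1))) ⁻¹' (univ ×ˢ B) := by
      ext y
      simp only [hA, mem_preimage, mem_setOf_eq, mem_prod, mem_univ, true_and, hB]
      simp only [homeomorphUnitSphereProd_apply_snd_coe, div_one]
    rw [hApre, (Measure.measurePreserving_homeomorphUnitSphereProd
      (volume : Measure (En (m+1)))).measure_preimage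
      ((MeasurableSet.univ.prod hBmeas).nullMeasurableSet), Measure.prod_prod]
    have hB0 : Measure.comap Subtype.val volume B = 0 := by
      rw [comap_subtype_coe_apply measurableSet_Ioi volume B]
      refine measure_mono_null (fun r hr => ?_ : (Subtype.val '' B) ⊆ N') hN'
      rcases hr with ⟨s, hs, rfl⟩
      exact hs
    have hvio : Measure.volumeIoiPow (Module.finrank ℝ (En (m+1)) - 1) B = 0 := by
      rw [Measure.volumeIoiPow, withDensity_apply _ hBmeas]
      exact setLIntegral_measure_zero _ _ hB0
    rw [hvio, mul_zero]
  refine le_antisymm ?_ (by positivity)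
  calc volume {x : En (m+1) | ‖x‖ ∈ N'}
      ≤ volume (({x : En (m+1) | ‖x‖ ∈ N'} ∩ {(0 : En (m+1))}ᶜ) ∪ {(0 : En (m+1))}) := by
        refine measure_mono fun x hx => ?_
        by_cases h : x = 0
        · exact Or.inr (by simp [h])
        · exact Or.inl ⟨hx, by simp [h]⟩
    _ ≤ volume ({x : En (m+1) | ‖x‖ ∈ N'} ∩ {(0 : En (m+1))}ᶜ) + volume {(0 : En (m+1))} :=
        measure_union_le _ _
    _ = 0 := by rw [key, measure_singleton, add_zero]

lemma radial_lt_top (m : ℕ) {ρ' : ℝ → ℝ} (hmeas : Measurable ρ')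
    (hfin : (∫⁻ r : ℝ, ENNReal.ofReal (ρ' r)) ≠ ∞) {R : ℝ}
    (hsupp : ∀ᵐ r : ℝ, R ≤ |r| → ρ' r = 0) :
    (∫⁻ x : En (m+1), ENNReal.ofReal (ρ' ‖x‖)) < ∞ := by
  set k := Module.finrank ℝ (En (m+1)) - 1 with hk
  have h1 : (∫⁻ x : En (m+1), ENNReal.ofReal (ρ' ‖x‖))
      = ∫⁻ x in ({(0:En (m+1))}ᶜ), ENNReal.ofReal (ρ' ‖x‖) := by
    rw [restrict_compl_singleton]
  rw [h1, ← lintegral_subtype_comap (measurableSet_singleton (0:En (m+1))).compl]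
  have hFmeas : Measurable (fun p : sphere (0:En (m+1)) 1 × Ioi (0:ℝ) =>
      ENNReal.ofReal (ρ' p.2)) :=
    (hmeas.comp (measurable_subtype_coe.comp measurable_snd)).ennreal_ofReal
  have h2 : (∫⁻ y : ({(0:En (m+1))}ᶜ : Set (En (m+1))),
        ENNReal.ofReal (ρ' ‖(y : En (m+1))‖) ∂(Measure.comap Subtype.val volume))
      = ∫⁻ p : sphere (0:En (m+1)) 1 × Ioi (0:ℝ), ENNReal.ofReal (ρ' p.2)
          ∂((Measure.toSphere (volume : Measure (En (m+1)))).prod (Measure.volumeIoiPow k)) :=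
    by rw [← (Measure.measurePreserving_homeomorphUnitSphereProd
      (volume : Measure (En (m+1)))).lintegral_comp hFmeas]
       simp only [homeomorphUnitSphereProd_apply_snd_coe, div_one]
  rw [h2]
  have h3 : (∫⁻ p : sphere (0:En (m+1)) 1 × Ioi (0:ℝ), ENNReal.ofReal (ρ' p.2)
          ∂((Measure.toSphere (volume : Measure (En (m+1)))).prod (Measure.volumeIoiPow k)))
      = (Measure.toSphere (volume : Measure (En (m+1)))) univ
        * ∫⁻ r : Ioi (0:ℝ), ENNReal.ofReal (ρ' r) ∂(Measure.volumeIoiPow k) := by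
    calc (∫⁻ p : sphere (0:En (m+1)) 1 × Ioi (0:ℝ), ENNReal.ofReal (ρ' p.2)
          ∂((Measure.toSphere (volume : Measure (En (m+1)))).prod (Measure.volumeIoiPow k)))
        = ∫⁻ p : sphere (0:En (m+1)) 1 × Ioi (0:ℝ),
            (fun _ : sphere (0:En (m+1)) 1 => (1:ℝ≥0∞)) p.1
              * (fun r : Ioi (0:ℝ) => ENNReal.ofReal (ρ' r)) p.2
          ∂((Measure.toSphere (volume : Measure (En (m+1)))).prod (Measure.volumeIoiPow k)) :=
          lintegral_congr fun p => (one_mul _).symm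
      _ = (∫⁻ _ : sphere (0:En (m+1)) 1, (1:ℝ≥0∞)
            ∂(Measure.toSphere (volume : Measure (En (m+1)))))
          * ∫⁻ r : Ioi (0:ℝ), ENNReal.ofReal (ρ' r) ∂(Measure.volumeIoiPow k) :=
          lintegral_prod_mul measurable_one.aemeasurable
            ((hmeas.comp measurable_subtype_coe).ennreal_ofReal).aemeasurable
      _ = (Measure.toSphere (volume : Measure (En (m+1)))) univ
          * ∫⁻ r : Ioi (0:ℝ), ENNReal.ofReal (ρ' r) ∂(Measure.volumeIoiPow k) := by
          rw [lintegral_one]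
  rw [h3]
  have h4 : (∫⁻ r : Ioi (0:ℝ), ENNReal.ofReal (ρ' r) ∂(Measure.volumeIoiPow k))
      = ∫⁻ r in Ioi (0:ℝ), ENNReal.ofReal (r ^ k) * ENNReal.ofReal (ρ' r) := by
    rw [Measure.volumeIoiPow, lintegral_withDensity_eq_lintegral_mul _
      ((measurable_subtype_coe.pow_const _).ennreal_ofReal)
      (Measurable.ennreal_ofReal (f := fun r : Ioi (0:ℝ) => ρ' (r:ℝ))
        (hmeas.comp measurable_subtype_coe))]
    rw [← lintegral_subtype_comap measurableSet_Ioi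
      (fun r : ℝ => ENNReal.ofReal (r ^ k) * ENNReal.ofReal (ρ' r))]
    exact lintegral_congr fun r => rfl
  rw [h4]
  have h5 : (∫⁻ r in Ioi (0:ℝ), ENNReal.ofReal (r ^ k) * ENNReal.ofReal (ρ' r))
      ≤ ENNReal.ofReal (max R 1 ^ k) * ∫⁻ r in Ioi (0:ℝ), ENNReal.ofReal (ρ' r) := by
    rw [← lintegral_const_mul' _ _ ENNReal.ofReal_ne_top]
    refine lintegral_mono_ae ?_
    filter_upwards [ae_restrict_of_ae hsupp, ae_restrict_mem measurableSet_Ioi] with r hr hr0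
    rcases le_or_gt R r with h | h
    · have : ρ' r = 0 := hr (by rwa [abs_of_pos hr0])
      simp [this]
    · refine mul_le_mul_left (ENNReal.ofReal_le_ofReal ?_) _
      exact pow_le_pow_left₀ (le_of_lt hr0) (le_max_of_le_left h.le) k
  refine ENNReal.mul_lt_top (measure_lt_top _ _) (lt_of_le_of_lt h5 ?_)
  refine ENNReal.mul_lt_top ENNReal.ofReal_lt_top ?_
  exact lt_of_le_of_lt (setLIntegral_le_lintegral _ _) hfin.lt_top

lemma lintegral_full (m : ℕ) {ρ₀ ρ' : ℝ → ℝ} (hρ0 : ∀ r, 0 ≤ ρ₀ r)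
    (hae : ρ₀ =ᵐ[(volume : Measure ℝ)] ρ') {ε : ℝ} (hε : 0 < ε) (x' : En m) (xn : ℝ) :
    (∫⁻ y : En m × ℝ,
        ENNReal.ofReal (ρ₀ (Real.sqrt (‖x' - y.1‖ ^ 2 + (xn + y.2) ^ 2) / ε) / ε ^ (m+1)))
      = ∫⁻ x : En (m+1), ENNReal.ofReal (ρ' ‖x‖) := by
  have hεp : (0:ℝ) < ε ^ (m+1) := pow_pos hε _
  set G : En m × ℝ → ℝ≥0∞ :=
    fun z => ENNReal.ofReal (ρ₀ (Real.sqrt (‖z.1‖ ^ 2 + z.2 ^ 2) / ε) / ε ^ (m+1)) with hG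
  have e₂mp : MeasurePreserving
      (fun y : En m × ℝ => ((x' - y.1 : En m), xn + y.2)) volume volume := by
    rw [Measure.volume_eq_prod]
    exact (Measure.measurePreserving_sub_left volume x').prod (measurePreserving_add_left volume xn)
  have hmap : Measure.map
      (⇑(MeasurableEquiv.prodCongr (MeasurableEquiv.subLeft x') (MeasurableEquiv.addLeft xn)))
      volume = volume := e₂mp.map_eq
  have hdiv : ∀ r : ℝ, ENNReal.ofReal (ρ₀ r / ε ^ (m+1))
      = ENNReal.ofReal (ρ₀ r) * ENNReal.ofReal ((ε ^ (m+1))⁻¹) := fun r => by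
    rw [div_eq_mul_inv, ENNReal.ofReal_mul (hρ0 r)]
  have step4 : (∫⁻ x : En (m+1), ENNReal.ofReal (ρ₀ ‖x‖))
      = ∫⁻ x : En (m+1), ENNReal.ofReal (ρ' ‖x‖) := by
    have hxa : ∀ᵐ x : En (m+1), ρ₀ ‖x‖ = ρ' ‖x‖ := by
      rw [ae_iff]
      exact measure_mono_null (fun x hx => hx) (null_norm_preimage m (ae_iff.1 hae))
    exact lintegral_congr_ae (hxa.mono fun x h => by dsimp only; rw [h])
  calc (∫⁻ y : En m × ℝ,
        ENNReal.ofReal (ρ₀ (Real.sqrt (‖x' - y.1‖ ^ 2 + (xn + y.2) ^ 2) / ε) / ε ^ (m+1)))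
      = ∫⁻ y : En m × ℝ, G
          ((MeasurableEquiv.prodCongr (MeasurableEquiv.subLeft x')
            (MeasurableEquiv.addLeft xn)) y) := lintegral_congr fun y => rfl
    _ = ∫⁻ z : En m × ℝ, G z ∂(Measure.map
          (⇑(MeasurableEquiv.prodCongr (MeasurableEquiv.subLeft x')
            (MeasurableEquiv.addLeft xn))) volume) :=
        (lintegral_map_equiv G _).symm
    _ = ∫⁻ z : En m × ℝ, G z := by rw [hmap]
    _ = ∫⁻ x : En (m+1), ENNReal.ofReal (ρ₀ (‖x‖ / ε) / ε ^ (m+1)) :=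
        lintegral_split m (fun r => ENNReal.ofReal (ρ₀ (r / ε) / ε ^ (m+1)))
    _ = ∫⁻ x : En (m+1), ENNReal.ofReal (ρ₀ (‖x‖ / ε)) * ENNReal.ofReal ((ε ^ (m+1))⁻¹) :=
        lintegral_congr fun x => hdiv _
    _ = (∫⁻ x : En (m+1), ENNReal.ofReal (ρ₀ (‖x‖ / ε))) * ENNReal.ofReal ((ε ^ (m+1))⁻¹) :=
        lintegral_mul_const' _ _ ENNReal.ofReal_ne_top
    _ = (ENNReal.ofReal (ε ^ (m+1)) * ∫⁻ x : En (m+1), ENNReal.ofReal (ρ₀ ‖x‖))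
          * ENNReal.ofReal ((ε ^ (m+1))⁻¹) := by
        rw [lintegral_norm_div m (fun r => ENNReal.ofReal (ρ₀ r)) hε]
    _ = (ENNReal.ofReal (ε ^ (m+1)) * ENNReal.ofReal ((ε ^ (m+1))⁻¹))
          * ∫⁻ x : En (m+1), ENNReal.ofReal (ρ₀ ‖x‖) := by ring
    _ = 1 * ∫⁻ x : En (m+1), ENNReal.ofReal (ρ₀ ‖x‖) := by
        rw [← ENNReal.ofReal_mul hεp.le, mul_inv_cancel₀ hεp.ne', ENNReal.ofReal_one]
    _ = ∫⁻ x : En (m+1), ENNReal.ofReal (ρ' ‖x‖) := by rw [one_mul, step4]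

lemma aeps_eq (m : ℕ) (ρ₀ : ℝ → ℝ) (ε δ : ℝ) (x' : En m) (xn : ℝ) :
    aeps (m+1) ρ₀ ε δ x' xn = ∫ y in (Metric.ball x' δ) ×ˢ (Set.Ioo (0 : ℝ) δ),
      ρ₀ (Real.sqrt (‖x' - y.1‖ ^ 2 + (xn + y.2) ^ 2) / ε) / ε ^ (m+1) := rfl

lemma aeps_eq_base (m : ℕ) (ρ₀ : ℝ → ℝ) (ε δ xn : ℝ) (x' : En m) :
    aeps (m+1) ρ₀ ε δ x' xn = aeps (m+1) ρ₀ ε δ (0 : En m) xn := by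
  rw [aeps_eq, aeps_eq]
  have hT : MeasurePreserving (fun y : En m × ℝ => ((x' - y.1 : En m), y.2)) volume volume := by
    rw [Measure.volume_eq_prod]
    exact (Measure.measurePreserving_sub_left volume x').prod (MeasurePreserving.id _)
  have hTe : MeasurableEmbedding (fun y : En m × ℝ => ((x' - y.1 : En m), y.2)) :=
    (MeasurableEquiv.prodCongr (MeasurableEquiv.subLeft x')
      (MeasurableEquiv.refl ℝ)).measurableEmbedding
  have hpre : (fun y : En m × ℝ => ((x' - y.1 : En m), y.2)) ⁻¹'
      ((Metric.ball (0 : En m) δ) ×ˢ (Set.Ioo (0:ℝ) δ))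
      = (Metric.ball x' δ) ×ˢ (Set.Ioo (0:ℝ) δ) := by
    ext ⟨y1, y2⟩
    simp [Metric.mem_ball, dist_eq_norm, norm_sub_rev]
  calc (∫ y in (Metric.ball x' δ) ×ˢ (Set.Ioo (0 : ℝ) δ),
        ρ₀ (Real.sqrt (‖x' - y.1‖ ^ 2 + (xn + y.2) ^ 2) / ε) / ε ^ (m+1))
      = ∫ y in (fun y : En m × ℝ => ((x' - y.1 : En m), y.2)) ⁻¹'
          ((Metric.ball (0 : En m) δ) ×ˢ (Set.Ioo (0:ℝ) δ)),
          ρ₀ (Real.sqrt (‖(0 : En m) - (x' - y.1)‖ ^ 2 + (xn + y.2) ^ 2) / ε) / ε ^ (m+1) := by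
        rw [hpre]
        refine setIntegral_congr_fun (measurableSet_ball.prod measurableSet_Ioo) fun y _ => ?_
        simp only [zero_sub, norm_neg]
    _ = ∫ w in (Metric.ball (0 : En m) δ) ×ˢ (Set.Ioo (0:ℝ) δ),
          ρ₀ (Real.sqrt (‖(0 : En m) - w.1‖ ^ 2 + (xn + w.2) ^ 2) / ε) / ε ^ (m+1) :=
        hT.setIntegral_preimage_emb hTe
          (fun w : En m × ℝ =>
            ρ₀ (Real.sqrt (‖(0 : En m) - w.1‖ ^ 2 + (xn + w.2) ^ 2) / ε) / ε ^ (m+1))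
          ((Metric.ball (0 : En m) δ) ×ˢ (Set.Ioo (0:ℝ) δ))

end AepsAux

/-- `a_ε` is independent of `x'` and satisfies
`‖a_ε‖²_{L²(ℝ₊)} ≤ C R ε`, where `C` depends only on `ρ` and `n`. -/
theorem aeps_independence_and_bound
    (n : ℕ) (hn : 0 < n) (ρ₀ : ℝ → ℝ)
    (hρ0 : ∀ r, 0 ≤ ρ₀ r) (heven : ∀ r, ρ₀ (-r) = ρ₀ r) (hint : Integrable ρ₀) :
    ∃ C : ℝ, 0 < C ∧ ∀ R : ℝ, 0 < R → (∀ r : ℝ, R ≤ |r| → ρ₀ r = 0) →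
      ∀ δ : ℝ, 0 < δ → ∀ ε : ℝ, 0 < ε →
        (∀ (x₁ x₂ : En (n - 1)) (xn : ℝ), aeps n ρ₀ ε δ x₁ xn = aeps n ρ₀ ε δ x₂ xn) ∧
        ∀ x' : En (n - 1),
          (∫ xn in Set.Ioi (0 : ℝ), (aeps n ρ₀ ε δ x' xn) ^ 2) ≤ C * R * ε := by
  classical
  obtain ⟨m, rfl⟩ : ∃ m, n = m + 1 := ⟨n - 1, (Nat.succ_pred_eq_of_pos hn).symm⟩
  have hsm := hint.aestronglyMeasurable
  set ρ' : ℝ → ℝ := hsm.mk ρ₀ with hρ'def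
  have hρ'meas : Measurable ρ' := hsm.stronglyMeasurable_mk.measurable
  have hae : ρ₀ =ᵐ[(volume : Measure ℝ)] ρ' := hsm.ae_eq_mk
  set W : ENNReal := (∫⁻ x : En (m+1), ENNReal.ofReal (ρ' ‖x‖)) with hWdef
  refine ⟨W.toReal ^ 2 + 1, by positivity, ?_⟩
  intro R hR hsupp δ hδ ε hε
  simp only [Nat.succ_sub_one]
  have hfinρ' : (∫⁻ r : ℝ, ENNReal.ofReal (ρ' r)) ≠ ⊤ := by
    have h1 : (fun r : ℝ => ENNReal.ofReal (ρ' r)) =ᵐ[(volume : Measure ℝ)]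
        (fun r : ℝ => ENNReal.ofReal (ρ₀ r)) :=
      hae.symm.mono fun r h => by dsimp only; rw [h]
    rw [lintegral_congr_ae h1]
    refine ne_of_lt (lt_of_le_of_lt (lintegral_mono fun r => Real.ofReal_le_enorm _) ?_)
    exact hint.hasFiniteIntegral
  have hsupp' : ∀ᵐ r : ℝ, R ≤ |r| → ρ' r = 0 := by
    filter_upwards [hae] with r h hr
    rw [← h]; exact hsupp r hr
  have hWfin : W < ⊤ := AepsAux.radial_lt_top m hρ'meas hfinρ' hsupp'
  refine ⟨?_, ?_⟩
  · intro x₁ x₂ xn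
    exact (AepsAux.aeps_eq_base m ρ₀ ε δ xn x₁).trans (AepsAux.aeps_eq_base m ρ₀ ε δ xn x₂).symm
  intro x'
  -- nonnegativity
  have haeps_nonneg : ∀ xn : ℝ, 0 ≤ aeps (m+1) ρ₀ ε δ x' xn := by
    intro xn
    rw [AepsAux.aeps_eq]
    exact setIntegral_nonneg (measurableSet_ball.prod measurableSet_Ioo)
      (fun y _ => div_nonneg (hρ0 _) (pow_nonneg hε.le _))
  -- vanishing for xn ≥ R ε
  have haeps_zero : ∀ xn : ℝ, R * ε ≤ xn → aeps (m+1) ρ₀ ε δ x' xn = 0 := by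
    intro xn hxn
    have hxn0 : 0 < xn := lt_of_lt_of_le (mul_pos hR hε) hxn
    rw [AepsAux.aeps_eq]
    refine setIntegral_eq_zero_of_forall_eq_zero fun y hy => ?_
    have hy2 : 0 < y.2 := hy.2.1
    have harg : R ≤ |Real.sqrt (‖x' - y.1‖ ^ 2 + (xn + y.2) ^ 2) / ε| := by
      rw [abs_of_nonneg (div_nonneg (Real.sqrt_nonneg _) hε.le)]
      rw [le_div_iff₀ hε]
      have h1 : (xn + y.2) ^ 2 ≤ ‖x' - y.1‖ ^ 2 + (xn + y.2) ^ 2 :=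
        le_add_of_nonneg_left (sq_nonneg _)
      have h2 := Real.sqrt_le_sqrt h1
      rw [Real.sqrt_sq (by linarith)] at h2
      linarith
    rw [hsupp _ harg, zero_div]
  -- upper bound
  have haeps_le : ∀ xn : ℝ, aeps (m+1) ρ₀ ε δ x' xn ≤ W.toReal := by
    intro xn
    rw [AepsAux.aeps_eq]
    set f : En m × ℝ → ℝ := fun y =>
      ρ₀ (Real.sqrt (‖x' - y.1‖ ^ 2 + (xn + y.2) ^ 2) / ε) / ε ^ (m+1) with hf
    by_cases hI : IntegrableOn f ((Metric.ball x' δ) ×ˢ (Set.Ioo (0:ℝ) δ)) volume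
    · rw [integral_eq_lintegral_of_nonneg_ae
        (Filter.Eventually.of_forall fun y => div_nonneg (hρ0 _) (pow_nonneg hε.le _))
        hI.aestronglyMeasurable]
      refine ENNReal.toReal_mono hWfin.ne ?_
      calc (∫⁻ y in (Metric.ball x' δ) ×ˢ (Set.Ioo (0:ℝ) δ), ENNReal.ofReal (f y))
          ≤ ∫⁻ y : En m × ℝ, ENNReal.ofReal (f y) := setLIntegral_le_lintegral _ _
        _ = W := AepsAux.lintegral_full m hρ0 hae hε x' xn
    · rw [integral_undef hI]
      exact ENNReal.toReal_nonneg
  -- conclusion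
  have key : ∀ xn ∈ Set.Ioi (0:ℝ), (aeps (m+1) ρ₀ ε δ x' xn) ^ 2 ≤
      (Set.Ioc (0:ℝ) (R * ε)).indicator (fun _ => W.toReal ^ 2) xn := by
    intro xn hxn
    rcases le_or_gt xn (R * ε) with h | h
    · rw [Set.indicator_of_mem (Set.mem_Ioc.mpr ⟨hxn, h⟩) (fun _ => W.toReal ^ 2)]
      exact pow_le_pow_left₀ (haeps_nonneg xn) (haeps_le xn) 2
    · rw [Set.indicator_of_notMem (fun hc => absurd (Set.mem_Ioc.mp hc).2 (not_le.2 h)) (fun _ => W.toReal ^ 2)]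
      rw [haeps_zero xn h.le]
      simp
  calc (∫ xn in Set.Ioi (0:ℝ), (aeps (m+1) ρ₀ ε δ x' xn) ^ 2)
      ≤ ∫ xn in Set.Ioi (0:ℝ),
          (Set.Ioc (0:ℝ) (R * ε)).indicator (fun _ => W.toReal ^ 2) xn := by
        refine integral_mono_of_nonneg
          (Filter.Eventually.of_forall fun xn => sq_nonneg _) ?_ ?_
        · rw [integrable_indicator_iff measurableSet_Ioc]
          refine integrableOn_const (lt_top_iff_ne_top.1 ?_)
          refine lt_of_le_of_lt (Measure.restrict_le_self _) ?_
          rw [Real.volume_Ioc]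
          exact ENNReal.ofReal_lt_top
        · exact (ae_restrict_iff' measurableSet_Ioi).2 (Filter.Eventually.of_forall key)
    _ = ∫ xn in Set.Ioc (0:ℝ) (R * ε), W.toReal ^ 2 ∂(volume.restrict (Set.Ioi 0)) := by
        rw [integral_indicator measurableSet_Ioc]
    _ ≤ W.toReal ^ 2 * (R * ε) := by
        rw [setIntegral_const]
        rw [Measure.real, Measure.restrict_apply measurableSet_Ioc]
        have hsub : Set.Ioc (0:ℝ) (R * ε) ∩ Set.Ioi 0 = Set.Ioc (0:ℝ) (R * ε) := by
          ext t; simp only [Set.mem_inter_iff, Set.mem_Ioc, Set.mem_Ioi, and_iff_left_iff_imp]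
          exact fun ht => ht.1
        rw [hsub, Real.volume_Ioc, smul_eq_mul]
        rw [ENNReal.toReal_ofReal (by nlinarith : (0:ℝ) ≤ R * ε - 0)]
        nlinarith [sq_nonneg W.toReal]
    _ ≤ (W.toReal ^ 2 + 1) * R * ε := by nlinarith [mul_pos hR hε, sq_nonneg W.toReal]
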